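/- arXiv:2112.10180 — 7 statements merged into one kernel-verified Lean document; each statement's English description precedes it below -/
import Mathlib

section
/- The Step out–Step in sequencing game has a nonempty core: there exists x ∈ ℝ^N with Σ_{i∈N} x_i = v(N) and Σ_{i∈S} x_i ≥ v(S) for every coalition S ⊆ N. -/
/-- Completion cost `C_j(σ) = w_j · Σ_{k : σ(k) ≤ σ(j)} p_k` of player `j` under order `σ`. -/
noncomputable def playerCost {n : ℕ} (p w : Fin n → ℝ) (σ : Equiv.Perm (Fin n)) (j : Fin n) : ℝ :=
  w j * ∑ k ∈ Finset.univ.filter (fun k => σ k ≤ σ j), p k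

/-- Total cost `C_S(σ)` of coalition `S` under order `σ`. -/
noncomputable def coalCost {n : ℕ} (p w : Fin n → ℝ) (S : Finset (Fin n))
    (σ : Equiv.Perm (Fin n)) : ℝ :=
  ∑ j ∈ S, playerCost p w σ j

/-- `σ` is admissible for coalition `S` (w.r.t. initial order `σ0`): no player outside `S`
may be overtaken. -/
def Admissible {n : ℕ} (σ0 : Equiv.Perm (Fin n)) (S : Finset (Fin n))
    (σ : Equiv.Perm (Fin n)) : Prop :=
  ∀ i j : Fin n, i ∉ S → σ0 i ≤ σ0 j → σ i ≤ σ j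

/-- The value `v(S) = C_S(σ0) − min{C_S(σ) : σ admissible for S}` of coalition `S`
in the SoSi sequencing game. -/
noncomputable def sosiValue {n : ℕ} (p w : Fin n → ℝ) (σ0 : Equiv.Perm (Fin n))
    (S : Finset (Fin n)) : ℝ :=
  coalCost p w S σ0 - sInf {c : ℝ | ∃ σ : Equiv.Perm (Fin n), Admissible σ0 S σ ∧ coalCost p w S σ = c}

/- ## Auxiliary definitions -/

/-- Pair gain: what swapping `k` (initially before `j`) past `j` can contribute. -/
noncomputable def gpair {n : ℕ} (p w : Fin n → ℝ) (σ0 : Equiv.Perm (Fin n)) (k j : Fin n) : ℝ :=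
  if σ0 k < σ0 j then max 0 (w j * p k - w k * p j) else 0

/-- Difference of indicator costs for pair (j,k) between `σ0` and `σ`. -/
noncomputable def Fdiff {n : ℕ} (p w : Fin n → ℝ) (σ0 σ : Equiv.Perm (Fin n)) (j k : Fin n) : ℝ :=
  (if σ0 k ≤ σ0 j then w j * p k else 0) - (if σ k ≤ σ j then w j * p k else 0)

lemma gpair_nonneg {n : ℕ} (p w : Fin n → ℝ) (σ0 : Equiv.Perm (Fin n)) (k j : Fin n) :
    0 ≤ gpair p w σ0 k j := by
  unfold gpair; split_ifs
  · exact le_max_left _ _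
  · exact le_refl 0

lemma coalCost_eq {n : ℕ} (p w : Fin n → ℝ) (S : Finset (Fin n)) (σ : Equiv.Perm (Fin n)) :
    coalCost p w S σ = ∑ j ∈ S, ∑ k, (if σ k ≤ σ j then w j * p k else 0) := by
  unfold coalCost playerCost
  refine Finset.sum_congr rfl fun j _ => ?_
  rw [Finset.mul_sum, Finset.sum_filter]

lemma cost_diff_eq {n : ℕ} (p w : Fin n → ℝ) (σ0 σ : Equiv.Perm (Fin n)) (S : Finset (Fin n)) :
    coalCost p w S σ0 - coalCost p w S σ = ∑ j ∈ S, ∑ k, Fdiff p w σ0 σ j k := by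
  rw [coalCost_eq, coalCost_eq]
  rw [← Finset.sum_sub_distrib]
  refine Finset.sum_congr rfl fun j _ => ?_
  rw [← Finset.sum_sub_distrib]
  rfl

/-- Generic symmetrization: compare double sums via pairwise sums. -/
lemma sym_sum_le {n : ℕ} (S : Finset (Fin n)) (F G : Fin n → Fin n → ℝ)
    (h : ∀ j k, F j k + F k j ≤ G j k + G k j) :
    ∑ j ∈ S, ∑ k ∈ S, F j k ≤ ∑ j ∈ S, ∑ k ∈ S, G j k := by
  have hFswap : ∑ j ∈ S, ∑ k ∈ S, F k j = ∑ j ∈ S, ∑ k ∈ S, F j k := Finset.sum_comm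
  have hGswap : ∑ j ∈ S, ∑ k ∈ S, G k j = ∑ j ∈ S, ∑ k ∈ S, G j k := Finset.sum_comm
  have e1 : ∑ j ∈ S, ∑ k ∈ S, (F j k + F k j) ≤ ∑ j ∈ S, ∑ k ∈ S, (G j k + G k j) :=
    Finset.sum_le_sum fun j _ => Finset.sum_le_sum fun k _ => h j k
  simp only [Finset.sum_add_distrib] at e1
  linarith

lemma sym_sum_eq {n : ℕ} (S : Finset (Fin n)) (F G : Fin n → Fin n → ℝ)
    (h : ∀ j k, F j k + F k j = G j k + G k j) :
    ∑ j ∈ S, ∑ k ∈ S, F j k = ∑ j ∈ S, ∑ k ∈ S, G j k :=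
  le_antisymm (sym_sum_le S F G fun j k => (h j k).le)
    (sym_sum_le S G F fun j k => (h j k).ge)
section
variable {n : ℕ} (p w : Fin n → ℝ) (σ0 σ : Equiv.Perm (Fin n))

lemma Fdiff_pair_le (hp : ∀ i, 0 ≤ p i) (hw : ∀ i, 0 ≤ w i) (j k : Fin n) :
    Fdiff p w σ0 σ j k + Fdiff p w σ0 σ k j ≤ gpair p w σ0 k j + gpair p w σ0 j k := by
  rcases eq_or_ne j k with rfl | hjk
  · simp [Fdiff, gpair]
  have h0ne : σ0 k ≠ σ0 j := fun h => hjk (σ0.injective h).symm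
  have hsne : σ k ≠ σ j := fun h => hjk (σ.injective h).symm
  have hm1 : w j * p k - w k * p j ≤ max 0 (w j * p k - w k * p j) := le_max_right _ _
  have hm2 : w k * p j - w j * p k ≤ max 0 (w k * p j - w j * p k) := le_max_right _ _
  have hm1' : (0:ℝ) ≤ max 0 (w j * p k - w k * p j) := le_max_left _ _
  have hm2' : (0:ℝ) ≤ max 0 (w k * p j - w j * p k) := le_max_left _ _
  unfold Fdiff gpair
  by_cases h1 : σ0 k ≤ σ0 j
  · have h1lt : σ0 k < σ0 j := h1.lt_of_ne h0ne
    have h1' : ¬ σ0 j ≤ σ0 k := not_le.mpr h1lt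
    have h1'lt : ¬ σ0 j < σ0 k := asymm h1lt
    rw [if_pos h1, if_neg h1', if_pos h1lt, if_neg h1'lt]
    by_cases h2 : σ k ≤ σ j
    · have h2' : ¬ σ j ≤ σ k := not_le.mpr (h2.lt_of_ne hsne)
      rw [if_pos h2, if_neg h2']; linarith
    · have h2' : σ j ≤ σ k := le_of_not_ge h2
      rw [if_neg h2, if_pos h2']; linarith
  · have h1lt : σ0 j < σ0 k := not_le.mp h1
    have h1' : σ0 j ≤ σ0 k := h1lt.le
    have h1'lt : ¬ σ0 k < σ0 j := asymm h1lt
    rw [if_neg h1, if_pos h1', if_neg h1'lt, if_pos h1lt]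
    by_cases h2 : σ k ≤ σ j
    · have h2' : ¬ σ j ≤ σ k := not_le.mpr (h2.lt_of_ne hsne)
      rw [if_pos h2, if_neg h2']; linarith
    · have h2' : σ j ≤ σ k := le_of_not_ge h2
      rw [if_neg h2, if_pos h2']; linarith

lemma Fdiff_nonmember (hp : ∀ i, 0 ≤ p i) (hw : ∀ i, 0 ≤ w i) {S : Finset (Fin n)}
    (hadm : Admissible σ0 S σ) {k : Fin n} (hk : k ∉ S) (j : Fin n) :
    Fdiff p w σ0 σ j k ≤ 0 := by
  have hwp : 0 ≤ w j * p k := mul_nonneg (hw j) (hp k)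
  unfold Fdiff
  by_cases h1 : σ0 k ≤ σ0 j
  · rw [if_pos h1, if_pos (hadm k j hk h1)]; linarith
  · rw [if_neg h1]; split_ifs <;> linarith

/-- The fundamental lower bound on admissible costs. -/
lemma cost_lb (hp : ∀ i, 0 ≤ p i) (hw : ∀ i, 0 ≤ w i) (S : Finset (Fin n))
    (hadm : Admissible σ0 S σ) :
    coalCost p w S σ0 - coalCost p w S σ ≤ ∑ j ∈ S, ∑ k ∈ S, gpair p w σ0 k j := by
  rw [cost_diff_eq]
  have step1 : ∑ j ∈ S, ∑ k, Fdiff p w σ0 σ j k ≤ ∑ j ∈ S, ∑ k ∈ S, Fdiff p w σ0 σ j k := by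
    refine Finset.sum_le_sum fun j _ => ?_
    rw [← Finset.sum_add_sum_compl S (Fdiff p w σ0 σ j)]
    have : ∑ k ∈ Sᶜ, Fdiff p w σ0 σ j k ≤ 0 :=
      Finset.sum_nonpos fun k hk =>
        Fdiff_nonmember p w σ0 σ hp hw hadm (Finset.mem_compl.mp hk) j
    linarith
  refine step1.trans ?_
  exact sym_sum_le S _ _ fun j k => Fdiff_pair_le p w σ0 σ hp hw j k

end
/-- Sorting key: jobs with higher `w/p` ratio (`⊥` = infinite ratio) come first. -/
noncomputable def keyf {n : ℕ} (p w : Fin n → ℝ) : Fin n → WithBot ℝ :=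
  fun j => if p j = 0 then ⊥ else ((-(w j / p j) : ℝ) : WithBot ℝ)

/-- An optimal order for the grand coalition. -/
noncomputable def sigmaStar {n : ℕ} (p w : Fin n → ℝ) : Equiv.Perm (Fin n) :=
  (Tuple.sort (keyf p w))⁻¹

lemma sigmaStar_lt {n : ℕ} {p w : Fin n → ℝ} (hp : ∀ i, 0 ≤ p i) (hw : ∀ i, 0 ≤ w i)
    {j k : Fin n} (h : w k * p j < w j * p k) :
    sigmaStar p w j < sigmaStar p w k := by
  have hwpkj : 0 ≤ w k * p j := mul_nonneg (hw k) (hp j)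
  have hpk : 0 < p k := by
    rcases (hp k).lt_or_eq with h' | h'
    · exact h'
    · exfalso; rw [← h'] at h; nlinarith
  have hkey : keyf p w j < keyf p w k := by
    unfold keyf
    rw [if_neg (ne_of_gt hpk)]
    by_cases hpj : p j = 0
    · rw [if_pos hpj]; exact WithBot.bot_lt_coe _
    · have hpj' : 0 < p j := (hp j).lt_of_ne (Ne.symm hpj)
      rw [if_neg hpj]
      have hdiv : w k / p k < w j / p j := (div_lt_div_iff₀ hpk hpj').mpr h
      exact_mod_cast neg_lt_neg hdiv
  by_contra hcon
  push_neg at hcon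
  have hm := Tuple.monotone_sort (keyf p w) hcon
  simp only [Function.comp_apply, sigmaStar, Equiv.Perm.inv_def, Equiv.apply_symm_apply] at hm
  exact absurd hm (not_le.mpr hkey)

section
variable {n : ℕ} (p w : Fin n → ℝ) (σ0 : Equiv.Perm (Fin n))

lemma Fdiff_pair_eq_aux (hp : ∀ i, 0 ≤ p i) (hw : ∀ i, 0 ≤ w i) {j k : Fin n} (hjk : j ≠ k)
    (h : w k * p j < w j * p k) :
    Fdiff p w σ0 (sigmaStar p w) j k + Fdiff p w σ0 (sigmaStar p w) k j
      = gpair p w σ0 k j + gpair p w σ0 j k := by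
  have h0ne : σ0 k ≠ σ0 j := fun h => hjk (σ0.injective h).symm
  have hs : sigmaStar p w j < sigmaStar p w k := sigmaStar_lt hp hw h
  have hs1 : ¬ sigmaStar p w k ≤ sigmaStar p w j := not_le.mpr hs
  have hs2 : sigmaStar p w j ≤ sigmaStar p w k := hs.le
  unfold Fdiff gpair
  by_cases h1 : σ0 k ≤ σ0 j
  · have h1lt : σ0 k < σ0 j := h1.lt_of_ne h0ne
    have h1' : ¬ σ0 j ≤ σ0 k := not_le.mpr h1lt
    have h1'lt : ¬ σ0 j < σ0 k := asymm h1lt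
    rw [if_pos h1, if_neg h1', if_pos h1lt, if_neg h1'lt, if_neg hs1, if_pos hs2,
      max_eq_right (by linarith : (0:ℝ) ≤ w j * p k - w k * p j)]
    ring
  · have h1lt : σ0 j < σ0 k := not_le.mp h1
    have h1' : σ0 j ≤ σ0 k := h1lt.le
    have h1'lt : ¬ σ0 k < σ0 j := asymm h1lt
    rw [if_neg h1, if_pos h1', if_neg h1'lt, if_pos h1lt, if_neg hs1, if_pos hs2,
      max_eq_left (by linarith : w k * p j - w j * p k ≤ (0:ℝ))]
    ring

lemma Fdiff_pair_eq (hp : ∀ i, 0 ≤ p i) (hw : ∀ i, 0 ≤ w i) (j k : Fin n) :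
    Fdiff p w σ0 (sigmaStar p w) j k + Fdiff p w σ0 (sigmaStar p w) k j
      = gpair p w σ0 k j + gpair p w σ0 j k := by
  rcases eq_or_ne j k with rfl | hjk
  · simp [Fdiff, gpair]
  rcases lt_trichotomy (w k * p j) (w j * p k) with h | h | h
  · exact Fdiff_pair_eq_aux p w σ0 hp hw hjk h
  · -- equal cross products: everything cancels
    have h0ne : σ0 k ≠ σ0 j := fun h => hjk (σ0.injective h).symm
    have hsne : sigmaStar p w k ≠ sigmaStar p w j :=
      fun h => hjk ((sigmaStar p w).injective h).symm
    unfold Fdiff gpair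
    by_cases h1 : σ0 k ≤ σ0 j
    · have h1lt : σ0 k < σ0 j := h1.lt_of_ne h0ne
      have h1' : ¬ σ0 j ≤ σ0 k := not_le.mpr h1lt
      have h1'lt : ¬ σ0 j < σ0 k := asymm h1lt
      rw [if_pos h1, if_neg h1', if_pos h1lt, if_neg h1'lt,
        max_eq_left (by linarith : w j * p k - w k * p j ≤ (0:ℝ))]
      by_cases h2 : sigmaStar p w k ≤ sigmaStar p w j
      · have h2' : ¬ sigmaStar p w j ≤ sigmaStar p w k := not_le.mpr (h2.lt_of_ne hsne)
        rw [if_pos h2, if_neg h2']; linarith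
      · have h2' : sigmaStar p w j ≤ sigmaStar p w k := le_of_not_ge h2
        rw [if_neg h2, if_pos h2']; linarith
    · have h1lt : σ0 j < σ0 k := not_le.mp h1
      have h1' : σ0 j ≤ σ0 k := h1lt.le
      have h1'lt : ¬ σ0 k < σ0 j := asymm h1lt
      rw [if_neg h1, if_pos h1', if_neg h1'lt, if_pos h1lt,
        max_eq_left (by linarith : w k * p j - w j * p k ≤ (0:ℝ))]
      by_cases h2 : sigmaStar p w k ≤ sigmaStar p w j
      · have h2' : ¬ sigmaStar p w j ≤ sigmaStar p w k := not_le.mpr (h2.lt_of_ne hsne)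
        rw [if_pos h2, if_neg h2']; linarith
      · have h2' : sigmaStar p w j ≤ sigmaStar p w k := le_of_not_ge h2
        rw [if_neg h2, if_pos h2']; linarith
  · have := Fdiff_pair_eq_aux p w σ0 hp hw hjk.symm h
    linarith

/-- The grand coalition achieves the full gain. -/
lemma cost_star (hp : ∀ i, 0 ≤ p i) (hw : ∀ i, 0 ≤ w i) :
    coalCost p w Finset.univ σ0 - coalCost p w Finset.univ (sigmaStar p w)
      = ∑ j, ∑ k, gpair p w σ0 k j := by
  rw [cost_diff_eq]
  exact sym_sum_eq Finset.univ _ _ fun j k => Fdiff_pair_eq p w σ0 hp hw j k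

end
/-- The SoSi sequencing game has a nonempty core. -/
theorem sosi_core_nonempty {n : ℕ} (p w : Fin n → ℝ) (hp : ∀ i, 0 ≤ p i) (hw : ∀ i, 0 ≤ w i)
    (σ0 : Equiv.Perm (Fin n)) :
    ∃ x : Fin n → ℝ, (∑ i, x i = sosiValue p w σ0 Finset.univ) ∧
      ∀ S : Finset (Fin n), sosiValue p w σ0 S ≤ ∑ i ∈ S, x i := by
  classical
  refine ⟨fun j => ∑ k, gpair p w σ0 k j, ?_, ?_⟩
  all_goals
    have hlb : ∀ S : Finset (Fin n), ∀ c ∈ {c : ℝ | ∃ σ : Equiv.Perm (Fin n),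
        Admissible σ0 S σ ∧ coalCost p w S σ = c},
        coalCost p w S σ0 - ∑ j ∈ S, ∑ k ∈ S, gpair p w σ0 k j ≤ c := by
      rintro S c ⟨σ, hσ, rfl⟩
      have := cost_lb p w σ0 σ hp hw S hσ
      linarith
    have hmem0 : ∀ S : Finset (Fin n), coalCost p w S σ0 ∈ {c : ℝ | ∃ σ : Equiv.Perm (Fin n),
        Admissible σ0 S σ ∧ coalCost p w S σ = c} := fun S => ⟨σ0, fun i j _ h => h, rfl⟩
    have hinf_ge : ∀ S : Finset (Fin n),
        coalCost p w S σ0 - ∑ j ∈ S, ∑ k ∈ S, gpair p w σ0 k j ≤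
          sInf {c : ℝ | ∃ σ : Equiv.Perm (Fin n),
            Admissible σ0 S σ ∧ coalCost p w S σ = c} :=
      fun S => le_csInf ⟨_, hmem0 S⟩ (hlb S)
  · -- efficiency
    have hstar := cost_star p w σ0 hp hw
    have admU : Admissible σ0 Finset.univ (sigmaStar p w) :=
      fun i j hi _ => absurd (Finset.mem_univ i) hi
    have hle : sInf {c : ℝ | ∃ σ : Equiv.Perm (Fin n),
        Admissible σ0 Finset.univ σ ∧ coalCost p w Finset.univ σ = c}
          ≤ coalCost p w Finset.univ (sigmaStar p w) :=
      csInf_le ⟨_, hlb Finset.univ⟩ ⟨sigmaStar p w, admU, rfl⟩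
    have hge := hinf_ge Finset.univ
    unfold sosiValue
    linarith
  · -- coalition rationality
    intro S
    have hge := hinf_ge S
    have hmono : ∑ j ∈ S, ∑ k ∈ S, gpair p w σ0 k j ≤ ∑ j ∈ S, ∑ k, gpair p w σ0 k j :=
      Finset.sum_le_sum fun j _ =>
        Finset.sum_le_sum_of_subset_of_nonneg (Finset.subset_univ S)
          (fun k _ _ => gpair_nonneg p w σ0 k j)
    unfold sosiValue
    linarith
end

section
/- Let σ_alg be the order produced by the greedy algorithm for coalition S starting from σ0. Then any two players in the same component of S respect Smith's rule in σ_alg: if j, k ∈ S lie in the same component of S with respect to σ_alg and σ_alg(j) < σ_alg(k), then u_j ≥ u_k. -/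
/-- `σ` is obtainable from `τ` by removing player `i` and reinserting it in the same or a
later position: the relative order of all other players is unchanged, and every player
preceding `i` still precedes `i`. -/
def MoveLater {n : ℕ} (i : Fin n) (τ σ : Equiv.Perm (Fin n)) : Prop :=
  (∀ x y : Fin n, x ≠ i → y ≠ i → (τ x < τ y ↔ σ x < σ y)) ∧
    (∀ x : Fin n, τ x < τ i → σ x < σ i)

/-- One step of the greedy algorithm for coalition `S`: among all orders obtainable from `τ`
by moving `i` to the same or a later position, `σ` minimizes `C_S`, and among those it puts
`i` in the earliest possible position. -/
def GreedyStep {n : ℕ} (p w : Fin n → ℝ) (S : Finset (Fin n)) (i : Fin n)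
    (τ σ : Equiv.Perm (Fin n)) : Prop :=
  MoveLater i τ σ ∧
    (∀ σ' : Equiv.Perm (Fin n), MoveLater i τ σ' → coalCost p w S σ ≤ coalCost p w S σ') ∧
    (∀ σ' : Equiv.Perm (Fin n), MoveLater i τ σ' →
      coalCost p w S σ' = coalCost p w S σ → σ i ≤ σ' i)

/-- A run of the greedy algorithm for coalition `S` starting from the order `init`:
the players of `S` are enumerated from latest to earliest according to `init`, and each
is greedily moved to its best weakly-later position (ties broken by earliest position).
The greedy order is `τ (Fin.last m)`. -/
structure GreedyRun {n : ℕ} (p w : Fin n → ℝ) (init : Equiv.Perm (Fin n))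
    (S : Finset (Fin n)) where
  /-- the number of players of `S` -/
  m : ℕ
  /-- the enumeration `i_1, …, i_m` of the players of `S` -/
  enum : Fin m → Fin n
  /-- the successive orders `τ_0, …, τ_m` -/
  τ : Fin (m + 1) → Equiv.Perm (Fin n)
  enum_inj : Function.Injective enum
  enum_mem : ∀ j : Fin n, j ∈ S ↔ ∃ t : Fin m, enum t = j
  enum_desc : ∀ s t : Fin m, s < t → init (enum t) < init (enum s)
  τ_zero : τ 0 = init
  step : ∀ t : Fin m, GreedyStep p w S (enum t) (τ t.castSucc) (τ t.succ)

/-- The order produced by a run of the greedy algorithm. -/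
def GreedyRun.alg {n : ℕ} {p w : Fin n → ℝ} {init : Equiv.Perm (Fin n)} {S : Finset (Fin n)}
    (run : GreedyRun p w init S) : Equiv.Perm (Fin n) :=
  run.τ (Fin.last run.m)

/-- `j` and `k` lie in the same component of `S` with respect to `σ`: both are in `S` and
every player positioned (weakly) between them is in `S`. -/
def SameComponent {n : ℕ} (S : Finset (Fin n)) (σ : Equiv.Perm (Fin n)) (j k : Fin n) : Prop :=
  j ∈ S ∧ k ∈ S ∧
    ∀ x : Fin n, min (σ j) (σ k) ≤ σ x → σ x ≤ max (σ j) (σ k) → x ∈ S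


section GsrAux

open Finset

/-- Cost change for an adjacent transposition: if `b` sits immediately after `a`,
swapping them (so `a` moves one later) changes `C_S` by `w a * p b - w b * p a`. -/
theorem gsr_cost_swap {n : ℕ} (p w : Fin n → ℝ) (S : Finset (Fin n))
    (σ : Equiv.Perm (Fin n)) (a b : Fin n)
    (hab : ((σ b : Fin n) : ℕ) = ((σ a : Fin n) : ℕ) + 1) (haS : a ∈ S) (hbS : b ∈ S) :
    coalCost p w S (σ * Equiv.swap a b) = coalCost p w S σ + w a * p b - w b * p a := by
  have hvne : ∀ x y : Fin n, x ≠ y → ((σ x : Fin n) : ℕ) ≠ ((σ y : Fin n) : ℕ) := by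
    intro x y hxy h
    exact hxy (σ.injective (Fin.val_injective h))
  have hne : a ≠ b := by intro h; rw [h] at hab; omega
  set Sa := ∑ k ∈ Finset.univ.filter (fun k => σ k ≤ σ a), p k with hSa
  have hins : Finset.univ.filter (fun k => σ k ≤ σ b)
      = insert b (Finset.univ.filter (fun k => σ k ≤ σ a)) := by
    ext k
    simp only [Finset.mem_filter, Finset.mem_univ, true_and, Finset.mem_insert, Fin.le_def]
    by_cases hk : k = b
    · subst hk; simp
    · have := hvne k b hk
      constructor
      · intro h; right; omega
      · rintro (h | h)
        · exact absurd h hk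
        · omega
  have hbnot : b ∉ Finset.univ.filter (fun k => σ k ≤ σ a) := by
    simp only [Finset.mem_filter, Finset.mem_univ, true_and, Fin.le_def]; omega
  have hsum_b : ∑ k ∈ Finset.univ.filter (fun k => σ k ≤ σ b), p k = p b + Sa := by
    rw [hins, Finset.sum_insert hbnot, hSa]
  have key : ∀ j ∈ S, playerCost p w (σ * Equiv.swap a b) j
      = playerCost p w σ j
        + ((if j = a then w a * p b else 0) + (if j = b then -(w b * p a) else 0)) := by
    intro j _
    by_cases hja : j = a
    · rw [hja]
      have h1 : (σ * Equiv.swap a b) a = σ b := by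
        simp [Equiv.Perm.mul_apply]
      have h2 : Finset.univ.filter (fun k => (σ * Equiv.swap a b) k ≤ σ b)
          = Finset.univ.filter (fun k => σ k ≤ σ b) := by
        ext k
        simp only [Finset.mem_filter, Finset.mem_univ, true_and]
        by_cases hka : k = a
        · rw [hka]
          simp only [Equiv.Perm.mul_apply, Equiv.swap_apply_left, Fin.le_def]
          omega
        · by_cases hkb : k = b
          · rw [hkb]
            simp only [Equiv.Perm.mul_apply, Equiv.swap_apply_right, Fin.le_def]
            omega
          · rw [show (σ * Equiv.swap a b) k = σ k by
              simp [Equiv.Perm.mul_apply, Equiv.swap_apply_of_ne_of_ne hka hkb]]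
      simp only [playerCost, h1, h2, hsum_b]
      rw [if_neg hne]
      simp only [if_true, ← hSa]
      ring
    · by_cases hjb : j = b
      · rw [hjb]
        have h1 : (σ * Equiv.swap a b) b = σ a := by
          simp [Equiv.Perm.mul_apply]
        have h2 : Finset.univ.filter (fun k => (σ * Equiv.swap a b) k ≤ σ a)
            = insert b ((Finset.univ.filter (fun k => σ k ≤ σ a)).erase a) := by
          ext k
          simp only [Finset.mem_filter, Finset.mem_univ, true_and, Finset.mem_insert,
            Finset.mem_erase]
          by_cases hka : k = a
          · rw [hka]
            simp only [Equiv.Perm.mul_apply, Equiv.swap_apply_left, Fin.le_def]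
            constructor
            · intro h; omega
            · rintro (h | ⟨h, _⟩)
              · exact absurd h hne
              · exact absurd rfl h
          · by_cases hkb : k = b
            · rw [hkb]
              simp only [Equiv.Perm.mul_apply, Equiv.swap_apply_right, Fin.le_def]
              simp
            · rw [show (σ * Equiv.swap a b) k = σ k by
                simp [Equiv.Perm.mul_apply, Equiv.swap_apply_of_ne_of_ne hka hkb]]
              simp only [Fin.le_def]
              constructor
              · intro h; exact Or.inr ⟨hka, h⟩
              · rintro (h | ⟨_, h⟩)
                · exact absurd h hkb
                · exact h
        have hbnot' : b ∉ (Finset.univ.filter (fun k => σ k ≤ σ a)).erase a := by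
          intro hmem
          exact hbnot (Finset.mem_of_mem_erase hmem)
        have haf : a ∈ Finset.univ.filter (fun k => σ k ≤ σ a) := by
          simp
        simp only [playerCost, h1, h2]
        rw [Finset.sum_insert hbnot', Finset.sum_erase_eq_sub haf, hsum_b]
        simp only [if_true, ← hSa]
        rw [if_neg (Ne.symm hne)]
        ring
      · have h1 : (σ * Equiv.swap a b) j = σ j := by
          simp [Equiv.Perm.mul_apply, Equiv.swap_apply_of_ne_of_ne hja hjb]
        have h2 : Finset.univ.filter (fun k => (σ * Equiv.swap a b) k ≤ σ j)
            = Finset.univ.filter (fun k => σ k ≤ σ j) := by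
          ext k
          simp only [Finset.mem_filter, Finset.mem_univ, true_and]
          by_cases hka : k = a
          · rw [hka]
            simp only [Equiv.Perm.mul_apply, Equiv.swap_apply_left, Fin.le_def]
            have h3 := hvne j a hja
            have h4 := hvne j b hjb
            omega
          · by_cases hkb : k = b
            · rw [hkb]
              simp only [Equiv.Perm.mul_apply, Equiv.swap_apply_right, Fin.le_def]
              have h3 := hvne j a hja
              have h4 := hvne j b hjb
              omega
            · rw [show (σ * Equiv.swap a b) k = σ k by
                simp [Equiv.Perm.mul_apply, Equiv.swap_apply_of_ne_of_ne hka hkb]]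
        simp only [playerCost, h1, h2]
        rw [if_neg hja, if_neg hjb]
        ring
  calc coalCost p w S (σ * Equiv.swap a b)
      = ∑ j ∈ S, (playerCost p w σ j
          + ((if j = a then w a * p b else 0) + (if j = b then -(w b * p a) else 0))) :=
        Finset.sum_congr rfl key
    _ = coalCost p w S σ + w a * p b - w b * p a := by
        rw [Finset.sum_add_distrib, Finset.sum_add_distrib,
          Finset.sum_ite_eq' S a (fun _ => w a * p b),
          Finset.sum_ite_eq' S b (fun _ => -(w b * p a)),
          if_pos haS, if_pos hbS, coalCost]
        ring

/-- Swapping `i` with the player `h` immediately before it is a legal "move later"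
move, provided `h` comes after `i` in the reference order `τ`. -/
theorem gsr_ml_left {n : ℕ} {i h : Fin n} {τ σ : Equiv.Perm (Fin n)}
    (hml : MoveLater i τ σ) (hτ : τ i < τ h)
    (hpos : ((σ i : Fin n) : ℕ) = ((σ h : Fin n) : ℕ) + 1) :
    MoveLater i τ (σ * Equiv.swap h i) := by
  have hvne : ∀ x y : Fin n, x ≠ y → ((σ x : Fin n) : ℕ) ≠ ((σ y : Fin n) : ℕ) := by
    intro x y hxy hv
    exact hxy (σ.injective (Fin.val_injective hv))
  have hhi : h ≠ i := by intro e; rw [e] at hpos; omega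
  constructor
  · intro x y hx hy
    rw [hml.1 x y hx hy]
    by_cases hxh : x = h
    · rw [hxh]
      by_cases hyh : y = h
      · rw [hyh]
        exact iff_of_false (lt_irrefl _) (lt_irrefl _)
      · rw [show (σ * Equiv.swap h i) h = σ i by simp [Equiv.Perm.mul_apply],
          show (σ * Equiv.swap h i) y = σ y by
            simp [Equiv.Perm.mul_apply, Equiv.swap_apply_of_ne_of_ne hyh hy]]
        have h1 := hvne y h hyh
        have h2 := hvne y i hy
        simp only [Fin.lt_def]
        omega
    · by_cases hyh : y = h
      · rw [hyh]
        rw [show (σ * Equiv.swap h i) h = σ i by simp [Equiv.Perm.mul_apply],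
          show (σ * Equiv.swap h i) x = σ x by
            simp [Equiv.Perm.mul_apply, Equiv.swap_apply_of_ne_of_ne hxh hx]]
        have h1 := hvne x h hxh
        have h2 := hvne x i hx
        simp only [Fin.lt_def]
        omega
      · rw [show (σ * Equiv.swap h i) x = σ x by
            simp [Equiv.Perm.mul_apply, Equiv.swap_apply_of_ne_of_ne hxh hx],
          show (σ * Equiv.swap h i) y = σ y by
            simp [Equiv.Perm.mul_apply, Equiv.swap_apply_of_ne_of_ne hyh hy]]
  · intro x hx
    have hxi : x ≠ i := by intro e; rw [e] at hx; exact lt_irrefl _ hx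
    have hxh : x ≠ h := by intro e; rw [e] at hx; exact lt_irrefl _ (hx.trans hτ)
    rw [show (σ * Equiv.swap h i) x = σ x by
        simp [Equiv.Perm.mul_apply, Equiv.swap_apply_of_ne_of_ne hxh hxi],
      show (σ * Equiv.swap h i) i = σ h by simp [Equiv.Perm.mul_apply]]
    have h1 := hml.2 x hx
    have h2 := hvne x h hxh
    simp only [Fin.lt_def] at h1 ⊢
    omega

/-- Swapping `i` with the player `h` immediately after it is a legal "move later" move. -/
theorem gsr_ml_right {n : ℕ} {i h : Fin n} {τ σ : Equiv.Perm (Fin n)}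
    (hml : MoveLater i τ σ)
    (hpos : ((σ h : Fin n) : ℕ) = ((σ i : Fin n) : ℕ) + 1) :
    MoveLater i τ (σ * Equiv.swap i h) := by
  have hvne : ∀ x y : Fin n, x ≠ y → ((σ x : Fin n) : ℕ) ≠ ((σ y : Fin n) : ℕ) := by
    intro x y hxy hv
    exact hxy (σ.injective (Fin.val_injective hv))
  have hhi : h ≠ i := by intro e; rw [e] at hpos; omega
  constructor
  · intro x y hx hy
    rw [hml.1 x y hx hy]
    by_cases hxh : x = h
    · rw [hxh]
      by_cases hyh : y = h
      · rw [hyh]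
        exact iff_of_false (lt_irrefl _) (lt_irrefl _)
      · rw [show (σ * Equiv.swap i h) h = σ i by simp [Equiv.Perm.mul_apply],
          show (σ * Equiv.swap i h) y = σ y by
            simp [Equiv.Perm.mul_apply, Equiv.swap_apply_of_ne_of_ne hy hyh]]
        have h1 := hvne y h hyh
        have h2 := hvne y i hy
        simp only [Fin.lt_def]
        omega
    · by_cases hyh : y = h
      · rw [hyh]
        rw [show (σ * Equiv.swap i h) h = σ i by simp [Equiv.Perm.mul_apply],
          show (σ * Equiv.swap i h) x = σ x by
            simp [Equiv.Perm.mul_apply, Equiv.swap_apply_of_ne_of_ne hx hxh]]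
        have h1 := hvne x h hxh
        have h2 := hvne x i hx
        simp only [Fin.lt_def]
        omega
      · rw [show (σ * Equiv.swap i h) x = σ x by
            simp [Equiv.Perm.mul_apply, Equiv.swap_apply_of_ne_of_ne hx hxh],
          show (σ * Equiv.swap i h) y = σ y by
            simp [Equiv.Perm.mul_apply, Equiv.swap_apply_of_ne_of_ne hy hyh]]
  · intro x hx
    have hxi : x ≠ i := by intro e; rw [e] at hx; exact lt_irrefl _ hx
    rw [show (σ * Equiv.swap i h) i = σ h by simp [Equiv.Perm.mul_apply]]
    by_cases hxh : x = h
    · rw [hxh, show (σ * Equiv.swap i h) h = σ i by simp [Equiv.Perm.mul_apply]]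
      simp only [Fin.lt_def]
      omega
    · rw [show (σ * Equiv.swap i h) x = σ x by
        simp [Equiv.Perm.mul_apply, Equiv.swap_apply_of_ne_of_ne hxi hxh]]
      have h1 := hml.2 x hx
      simp only [Fin.lt_def] at h1 ⊢
      omega

/-- Smith's rule holds within components of `T` under `σ` (cross-multiplied form). -/
def GsrSmith {n : ℕ} (p w : Fin n → ℝ) (T : Set (Fin n)) (σ : Equiv.Perm (Fin n)) : Prop :=
  ∀ j ∈ T, ∀ k ∈ T, σ j < σ k →
    (∀ x : Fin n, σ j < σ x → σ x < σ k → x ∈ T) → w k * p j ≤ w j * p k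

/-- The key invariant step: a greedy step preserves Smith's rule within components. -/
theorem gsr_step {n : ℕ} {p w : Fin n → ℝ} (hp : ∀ i, 0 < p i)
    {S : Finset (Fin n)} {i : Fin n} {τ σ : Equiv.Perm (Fin n)}
    (hgs : GreedyStep p w S i τ σ) (hiS : i ∈ S)
    {T : Set (Fin n)} (hTS : ∀ x ∈ T, x ∈ S) (hiT : i ∉ T)
    (hprec : ∀ h ∈ T, τ i < τ h) (hinv : GsrSmith p w T τ) :
    GsrSmith p w (insert i T) σ := by
  obtain ⟨hml, hopt, -⟩ := hgs
  have hvne : ∀ x y : Fin n, x ≠ y → ((σ x : Fin n) : ℕ) ≠ ((σ y : Fin n) : ℕ) := by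
    intro x y hxy hv
    exact hxy (σ.injective (Fin.val_injective hv))
  have tool1 : ∀ h ∈ T, ((σ i : Fin n) : ℕ) = ((σ h : Fin n) : ℕ) + 1 →
      w i * p h ≤ w h * p i := by
    intro h hh hpos
    have hmv := gsr_ml_left hml (hprec h hh) hpos
    have hcost := gsr_cost_swap p w S σ h i hpos (hTS h hh) hiS
    have hle := hopt _ hmv
    rw [hcost] at hle
    linarith
  have tool2 : ∀ h, h ∈ S → ((σ h : Fin n) : ℕ) = ((σ i : Fin n) : ℕ) + 1 →
      w h * p i ≤ w i * p h := by
    intro h hh hpos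
    have hmv := gsr_ml_right hml hpos
    have hcost := gsr_cost_swap p w S σ i h hpos hiS hh
    have hle := hopt _ hmv
    rw [hcost] at hle
    linarith
  have tool3 : ∀ j ∈ T, ∀ k ∈ T, σ j < σ k →
      (∀ x : Fin n, x ≠ i → σ j < σ x → σ x < σ k → x ∈ T) → w k * p j ≤ w j * p k := by
    intro j hj k hk hjk hbet
    have hji : j ≠ i := fun e => hiT (e ▸ hj)
    have hki : k ≠ i := fun e => hiT (e ▸ hk)
    have hτjk : τ j < τ k := (hml.1 j k hji hki).mpr hjk
    refine hinv j hj k hk hτjk ?_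
    intro x hx1 hx2
    have hxi : x ≠ i := by
      intro e
      rw [e] at hx1
      exact lt_asymm hx1 (hprec j hj)
    exact hbet x hxi ((hml.1 j x hji hxi).mp hx1) ((hml.1 x k hxi hki).mp hx2)
  intro j hj k hk hjk hbet
  rcases Set.mem_insert_iff.mp hj with hji | hjT
  · -- j = i
    subst hji
    have hki : k ≠ j := by
      intro e
      rw [e] at hjk
      exact lt_irrefl _ hjk
    have hkT : k ∈ T := (Set.mem_insert_iff.mp hk).resolve_left hki
    have hlt' : ((σ j : Fin n) : ℕ) < ((σ k : Fin n) : ℕ) := Fin.lt_def.mp hjk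
    have hposn : ((σ j : Fin n) : ℕ) + 1 < n := by
      have := (σ k).isLt
      omega
    set h := σ.symm ⟨((σ j : Fin n) : ℕ) + 1, hposn⟩ with hh
    have hσh : ((σ h : Fin n) : ℕ) = ((σ j : Fin n) : ℕ) + 1 := by
      rw [hh, Equiv.apply_symm_apply]
    by_cases hhk : h = k
    · exact tool2 k (hTS k hkT) (by rw [← hhk]; exact hσh)
    · have hσhk : σ h < σ k := by
        have := hvne h k hhk
        rw [Fin.lt_def]
        omega
      have hih : σ j < σ h := Fin.lt_def.mpr (by omega)
      have hhT : h ∈ T := by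
        rcases Set.mem_insert_iff.mp (hbet h hih hσhk) with e | e
        · exfalso; rw [e] at hσh; omega
        · exact e
      have t2 := tool2 h (hTS h hhT) hσh
      have t3 := tool3 h hhT k hkT hσhk (fun x hxi h1 h2 =>
        ((Set.mem_insert_iff.mp (hbet x (lt_trans hih h1) h2)).resolve_left hxi))
      have c1 := mul_le_mul_of_nonneg_right t2 (hp k).le
      have c2 := mul_le_mul_of_nonneg_right t3 (hp j).le
      have hfin : (w k * p j) * p h ≤ (w j * p k) * p h := by nlinarith [c1, c2]
      exact le_of_mul_le_mul_right hfin (hp h)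
  · rcases Set.mem_insert_iff.mp hk with hki | hkT
    · -- k = i
      subst hki
      have hjne : j ≠ k := by
        intro e
        rw [e] at hjk
        exact lt_irrefl _ hjk
      have hlt' : ((σ j : Fin n) : ℕ) < ((σ k : Fin n) : ℕ) := Fin.lt_def.mp hjk
      have hposn : ((σ k : Fin n) : ℕ) - 1 < n := by
        have := (σ k).isLt
        omega
      set h := σ.symm ⟨((σ k : Fin n) : ℕ) - 1, hposn⟩ with hh
      have hσh : ((σ h : Fin n) : ℕ) = ((σ k : Fin n) : ℕ) - 1 := by
        rw [hh, Equiv.apply_symm_apply]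
      have hσh' : ((σ k : Fin n) : ℕ) = ((σ h : Fin n) : ℕ) + 1 := by omega
      by_cases hhj : h = j
      · exact tool1 j hjT (by rw [← hhj]; exact hσh')
      · have hσjh : σ j < σ h := by
          have := hvne h j hhj
          rw [Fin.lt_def]
          omega
        have hhi' : σ h < σ k := Fin.lt_def.mpr (by omega)
        have hhT : h ∈ T := by
          rcases Set.mem_insert_iff.mp (hbet h hσjh hhi') with e | e
          · exfalso; rw [e] at hσh'; omega
          · exact e
        have t1 := tool1 h hhT hσh'
        have t3 := tool3 j hjT h hhT hσjh (fun x hxi h1 h2 =>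
          ((Set.mem_insert_iff.mp (hbet x h1 (lt_trans h2 hhi'))).resolve_left hxi))
        have c1 := mul_le_mul_of_nonneg_right t1 (hp j).le
        have c2 := mul_le_mul_of_nonneg_right t3 (hp k).le
        have hfin : (w k * p j) * p h ≤ (w j * p k) * p h := by nlinarith [c1, c2]
        exact le_of_mul_le_mul_right hfin (hp h)
    · exact tool3 j hjT k hkT hjk (fun x hxi h1 h2 =>
        (Set.mem_insert_iff.mp (hbet x h1 h2)).resolve_left hxi)

/-- The set of players processed in the first `t` greedy steps. -/
def gsrT {n m : ℕ} (enum : Fin m → Fin n) (t : ℕ) : Set (Fin n) :=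
  {x | ∃ s : Fin m, (s : ℕ) < t ∧ enum s = x}

theorem greedy_smith_rule' {n : ℕ} (p w : Fin n → ℝ) (hp : ∀ i, 0 < p i)
    (σ0 : Equiv.Perm (Fin n)) (S : Finset (Fin n)) (run : GreedyRun p w σ0 S)
    (j k : Fin n) (hcomp : SameComponent S run.alg j k) (hlt : run.alg j < run.alg k) :
    w k / p k ≤ w j / p j := by
  obtain ⟨jS, kS, hbetw⟩ := hcomp
  have key : ∀ t : ℕ, ∀ ht : t ≤ run.m,
      (∀ x y : Fin n, x ∉ gsrT run.enum t → x ≠ y → σ0 x < σ0 y →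
        run.τ ⟨t, Nat.lt_succ_of_le ht⟩ x < run.τ ⟨t, Nat.lt_succ_of_le ht⟩ y) ∧
      GsrSmith p w (gsrT run.enum t) (run.τ ⟨t, Nat.lt_succ_of_le ht⟩) := by
    intro t
    induction t with
    | zero =>
      intro ht
      have e0 : run.τ ⟨0, Nat.lt_succ_of_le ht⟩ = σ0 := by
        have h00 : (⟨0, Nat.lt_succ_of_le ht⟩ : Fin (run.m + 1)) = 0 := Fin.ext (by simp)
        rw [h00, run.τ_zero]
      constructor
      · intro x y _ _ hxy
        rw [e0]
        exact hxy
      · intro a ha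
        exfalso
        obtain ⟨s, hs, -⟩ := ha
        omega
    | succ t ih =>
      intro ht
      have ht' : t ≤ run.m := Nat.le_of_succ_le ht
      obtain ⟨ih1, ih2⟩ := ih ht'
      have hstep := run.step ⟨t, ht⟩
      have hiT : run.enum ⟨t, ht⟩ ∉ gsrT run.enum t := by
        rintro ⟨s, hs, he⟩
        have hst : s = ⟨t, ht⟩ := run.enum_inj he
        rw [hst] at hs
        exact absurd hs (lt_irrefl t)
      have hT1 : gsrT run.enum (t + 1) = insert (run.enum ⟨t, ht⟩) (gsrT run.enum t) := by
        ext x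
        simp only [gsrT, Set.mem_setOf_eq, Set.mem_insert_iff]
        constructor
        · rintro ⟨s, hs, rfl⟩
          by_cases hst : (s : ℕ) = t
          · exact Or.inl (by rw [show s = (⟨t, ht⟩ : Fin run.m) from Fin.ext hst])
          · exact Or.inr ⟨s, by omega, rfl⟩
        · rintro (h | ⟨s, hs, rfl⟩)
          · exact ⟨⟨t, ht⟩, Nat.lt_succ_self t, h.symm⟩
          · exact ⟨s, by omega, rfl⟩
      have hTS : ∀ x ∈ gsrT run.enum t, x ∈ S := by
        rintro x ⟨s, -, rfl⟩
        exact (run.enum_mem _).mpr ⟨s, rfl⟩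
      have hiS : run.enum ⟨t, ht⟩ ∈ S := (run.enum_mem _).mpr ⟨⟨t, ht⟩, rfl⟩
      have hprec : ∀ h ∈ gsrT run.enum t,
          run.τ (Fin.castSucc ⟨t, ht⟩) (run.enum ⟨t, ht⟩) < run.τ (Fin.castSucc ⟨t, ht⟩) h := by
        rintro x ⟨s, hs, rfl⟩
        have hne : run.enum ⟨t, ht⟩ ≠ run.enum s := by
          intro e
          have := run.enum_inj e
          rw [← this] at hs
          exact absurd hs (lt_irrefl t)
        have hdesc := run.enum_desc s ⟨t, ht⟩ (Fin.lt_def.mpr hs)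
        exact ih1 _ _ hiT hne hdesc
      constructor
      · intro x y hx hxy h0
        have hxTt : x ∉ gsrT run.enum t := by
          intro hm
          obtain ⟨s, hs, he⟩ := hm
          exact hx ⟨s, by omega, he⟩
        have hxi : x ≠ run.enum ⟨t, ht⟩ := by
          intro e
          exact hx ⟨⟨t, ht⟩, Nat.lt_succ_self t, e.symm⟩
        by_cases hyi : y = run.enum ⟨t, ht⟩
        · rw [hyi] at h0 ⊢
          exact hstep.1.2 x (ih1 x _ hxTt hxi h0)
        · exact (hstep.1.1 x y hxi hyi).mp (ih1 x y hxTt hxy h0)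
      · rw [hT1]
        exact gsr_step hp hstep hiS hTS hiT hprec ih2
  have hfin := (key run.m le_rfl).2
  have hTm : gsrT run.enum run.m = (S : Set (Fin n)) := by
    ext x
    simp only [gsrT, Set.mem_setOf_eq, Finset.mem_coe]
    constructor
    · rintro ⟨s, -, rfl⟩
      exact (run.enum_mem _).mpr ⟨s, rfl⟩
    · intro hx
      obtain ⟨s, hse⟩ := (run.enum_mem x).mp hx
      exact ⟨s, s.isLt, hse⟩
  rw [hTm] at hfin
  have smith := hfin j (Finset.mem_coe.mpr jS) k (Finset.mem_coe.mpr kS) hlt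
    (fun x h1 h2 => Finset.mem_coe.mpr (hbetw x
      (by rw [min_eq_left hlt.le]; exact le_of_lt h1)
      (by rw [max_eq_right hlt.le]; exact le_of_lt h2)))
  rw [div_le_div_iff₀ (hp k) (hp j)]
  exact smith

end GsrAux

/-- In the order produced by the greedy algorithm, any two players in the same component
of `S` respect Smith's rule: the earlier one has at least the urgency of the later one. -/
theorem greedy_smith_rule {n : ℕ} (p w : Fin n → ℝ) (hp : ∀ i, 0 < p i) (hw : ∀ i, 0 ≤ w i)
    (σ0 : Equiv.Perm (Fin n)) (S : Finset (Fin n)) (run : GreedyRun p w σ0 S)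
    (j k : Fin n) (hcomp : SameComponent S run.alg j k) (hlt : run.alg j < run.alg k) :
    w k / p k ≤ w j / p j := by
  exact greedy_smith_rule' p w hp σ0 S run j k hcomp hlt
end

section
/- Let S ⊆ N be a coalition, let j, k ∈ S be distinct players with w_j > 0, w_k > 0, p_j > 0, p_k > 0 and u_j ≥ u_k, and let ∅ = W_0 ⊊ W_1 ⊊ ⋯ ⊊ W_r be a chain of subsets of N \ {j, k}. Let t* be the smallest index maximizing t ↦ δ_{kW_t}(S) and s* the smallest index maximizing t ↦ δ_{jW_t}(S). Then for every t > t* one has δ_{jW_t}(S) ≤ δ_{jW_{t*}}(S), and consequently s* ≤ t*. -/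
/-- `δ_{jk}(S) = 1_S(k)·p_j·w_k − 1_S(j)·p_k·w_j`. -/
def delta {n : ℕ} (p w : Fin n → ℝ) (S : Finset (Fin n)) (j k : Fin n) : ℝ :=
  (if k ∈ S then p j * w k else 0) - (if j ∈ S then p k * w j else 0)

/-- `δ_{jP}(S) = Σ_{k ∈ P} δ_{jk}(S)`. -/
def deltaSet {n : ℕ} (p w : Fin n → ℝ) (S : Finset (Fin n)) (j : Fin n)
    (P : Finset (Fin n)) : ℝ :=
  ∑ k ∈ P, delta p w S j k

/-- Given a chain `∅ = W_0 ⊊ W_1 ⊊ ⋯ ⊊ W_r` of subsets of `N \ {j,k}`, with `j, k ∈ S`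
distinct, `u_j ≥ u_k`, `t*` the smallest maximizer of `t ↦ δ_{kW_t}(S)` and `s*` the
smallest maximizer of `t ↦ δ_{jW_t}(S)`: every `t > t*` satisfies
`δ_{jW_t}(S) ≤ δ_{jW_{t*}}(S)`, and consequently `s* ≤ t*`. -/
theorem greedy_maximizer_mono {n : ℕ} (p w : Fin n → ℝ) (hp : ∀ i, 0 ≤ p i)
    (hw : ∀ i, 0 ≤ w i) (S : Finset (Fin n)) (j k : Fin n) (hj : j ∈ S) (hk : k ∈ S)
    (hjk : j ≠ k) (hwj : 0 < w j) (hwk : 0 < w k) (hpj : 0 < p j) (hpk : 0 < p k)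
    (hu : w k / p k ≤ w j / p j)
    (r : ℕ) (W : Fin (r + 1) → Finset (Fin n))
    (hW0 : W 0 = ∅)
    (hchain : ∀ s t : Fin (r + 1), s < t → W s ⊂ W t)
    (hWj : ∀ t, j ∉ W t) (hWk : ∀ t, k ∉ W t)
    (tstar sstar : Fin (r + 1))
    (ht_max : ∀ t, deltaSet p w S k (W t) ≤ deltaSet p w S k (W tstar))
    (ht_min : ∀ t, deltaSet p w S k (W t) = deltaSet p w S k (W tstar) → tstar ≤ t)
    (hs_max : ∀ t, deltaSet p w S j (W t) ≤ deltaSet p w S j (W sstar))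
    (hs_min : ∀ t, deltaSet p w S j (W t) = deltaSet p w S j (W sstar) → sstar ≤ t) :
    (∀ t, tstar < t → deltaSet p w S j (W t) ≤ deltaSet p w S j (W tstar)) ∧
      sstar ≤ tstar := by
  have hc : 0 ≤ p j / p k := div_nonneg hpj.le hpk.le
  have hcw : (p j / p k) * w k ≤ w j := by
    rw [div_mul_eq_mul_div, div_le_iff₀ hpk]
    rw [div_le_div_iff₀ hpk hpj] at hu
    linarith
  have key : ∀ t, tstar < t → deltaSet p w S j (W t) ≤ deltaSet p w S j (W tstar) := by
    intro t ht
    have hsub : W tstar ⊆ W t := (hchain _ _ ht).subset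
    have hsumj := Finset.sum_sdiff (f := delta p w S j) hsub
    have hsumk := Finset.sum_sdiff (f := delta p w S k) hsub
    have hdk : ∑ i ∈ W t \ W tstar, delta p w S k i ≤ 0 := by
      have := ht_max t
      unfold deltaSet at this
      linarith [hsumk]
    have hpt : ∀ i ∈ W t \ W tstar, delta p w S j i ≤ (p j / p k) * delta p w S k i := by
      intro i hi
      have hiW : i ∈ W t := (Finset.mem_sdiff.mp hi).1
      unfold delta
      simp only [hj, hk, if_true]
      have hpk' : p k ≠ 0 := hpk.ne'
      have hmc : p j / p k * p k = p j := div_mul_cancel₀ (p j) hpk'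
      by_cases hiS : i ∈ S <;> simp [hiS] <;>
        nlinarith [mul_nonneg (hp i) (sub_nonneg.mpr hcw), hmc, hw i]
    have hsum : ∑ i ∈ W t \ W tstar, delta p w S j i ≤
        (p j / p k) * ∑ i ∈ W t \ W tstar, delta p w S k i := by
      rw [Finset.mul_sum]
      exact Finset.sum_le_sum hpt
    have : ∑ i ∈ W t \ W tstar, delta p w S j i ≤ 0 :=
      hsum.trans (by nlinarith)
    unfold deltaSet
    linarith [hsumj]
  refine ⟨key, ?_⟩
  by_contra h
  push_neg at h
  have h1 := key sstar h
  have h2 := hs_max tstar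
  have h3 := hs_min tstar (le_antisymm h1 h2).symm
  exact absurd h3 (not_le.mpr h)
end

section
/- Let N be a finite set and let f, g : 2^N → ℝ be supermodular set functions such that f − g is monotone. Then the pointwise maximum max{f, g} is supermodular. -/
/-- A set function is supermodular. -/
def Supermodular {α : Type*} [DecidableEq α] (f : Finset α → ℝ) : Prop :=
  ∀ S T : Finset α, f S + f T ≤ f (S ∪ T) + f (S ∩ T)

/-- Lovász: if `f` and `g` are supermodular and `f − g` is monotone, then
`max {f, g}` is supermodular. -/
theorem sup_supermodular {α : Type*} [DecidableEq α] [Fintype α] (f g : Finset α → ℝ)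
    (hf : Supermodular f) (hg : Supermodular g)
    (hmono : ∀ S T : Finset α, S ⊆ T → f S - g S ≤ f T - g T) :
    Supermodular (fun S => max (f S) (g S)) := by
  intro S T
  simp only
  have h1 := hf S T
  have h2 := hg S T
  have h3 := hmono (S ∩ T) S Finset.inter_subset_left
  have h4 := hmono (S ∩ T) T Finset.inter_subset_right
  have l1 := le_max_left (f (S ∪ T)) (g (S ∪ T))
  have l2 := le_max_right (f (S ∪ T)) (g (S ∪ T))
  have l3 := le_max_left (f (S ∩ T)) (g (S ∩ T))
  have l4 := le_max_right (f (S ∩ T)) (g (S ∩ T))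
  rcases le_total (f S) (g S) with hS | hS <;>
    rcases le_total (f T) (g T) with hT | hT
  · rw [max_eq_right hS, max_eq_right hT]; linarith
  · rw [max_eq_right hS, max_eq_left hT]; linarith
  · rw [max_eq_left hS, max_eq_right hT]; linarith
  · rw [max_eq_left hS, max_eq_left hT]; linarith
end

section
/- Let N be a finite set, let k ≥ 1, and let g_1, …, g_k : 2^N → ℝ each be monotone and supermodular. Define f_k(S) = max_{1 ≤ r ≤ k} Σ_{j=1}^r g_j(S). Then f_k is supermodular. -/
/-- A set function is monotone. -/
def MonotoneSetFn {α : Type*} (f : Finset α → ℝ) : Prop :=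
  ∀ S T : Finset α, S ⊆ T → f S ≤ f T

lemma prefix_max_aux {α : Type*} [DecidableEq α]
    (k : ℕ) (g : ℕ → Finset α → ℝ)
    (hmono : ∀ j, 1 ≤ j → j ≤ k → MonotoneSetFn (g j))
    (hsup : ∀ j, 1 ≤ j → j ≤ k → Supermodular (g j))
    (p q : ℕ) (hq : q ≤ k) (hpq : p ≤ q) (S T : Finset α) :
    (∑ j ∈ Finset.Icc 1 p, g j S) + (∑ j ∈ Finset.Icc 1 q, g j T) ≤
      (∑ j ∈ Finset.Icc 1 q, g j (S ∪ T)) + (∑ j ∈ Finset.Icc 1 p, g j (S ∩ T)) := by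
  have hsplit : ∀ U : Finset α,
      (∑ j ∈ Finset.Icc 1 q, g j U) =
        (∑ j ∈ Finset.Icc 1 p, g j U) + (∑ j ∈ Finset.Ioc p q, g j U) := by
    intro U
    rw [show Finset.Icc 1 p = Finset.Ioc 0 p from rfl,
        show Finset.Icc 1 q = Finset.Ioc 0 q from rfl,
        Finset.sum_Ioc_consecutive _ (Nat.zero_le p) hpq]
  rw [hsplit T, hsplit (S ∪ T)]
  have h1 : (∑ j ∈ Finset.Icc 1 p, g j S) + (∑ j ∈ Finset.Icc 1 p, g j T) ≤
      (∑ j ∈ Finset.Icc 1 p, g j (S ∪ T)) + (∑ j ∈ Finset.Icc 1 p, g j (S ∩ T)) := by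
    rw [← Finset.sum_add_distrib, ← Finset.sum_add_distrib]
    apply Finset.sum_le_sum
    intro j hj
    simp only [Finset.mem_Icc] at hj
    exact hsup j hj.1 (hj.2.trans (hpq.trans hq)) S T
  have h2 : (∑ j ∈ Finset.Ioc p q, g j T) ≤ (∑ j ∈ Finset.Ioc p q, g j (S ∪ T)) := by
    apply Finset.sum_le_sum
    intro j hj
    simp only [Finset.mem_Ioc] at hj
    exact hmono j (Nat.one_le_of_lt (Nat.lt_of_le_of_lt (Nat.zero_le p) hj.1))
      (hj.2.trans hq) T (S ∪ T) Finset.subset_union_right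
  linarith

/-- If `g_1, …, g_k` are monotone and supermodular, then
`f_k(S) = max_{1 ≤ r ≤ k} Σ_{j=1}^r g_j(S)` is supermodular. -/
theorem prefix_max_supermodular {α : Type*} [DecidableEq α] [Fintype α]
    (k : ℕ) (hk : 1 ≤ k) (g : ℕ → Finset α → ℝ)
    (hmono : ∀ j, 1 ≤ j → j ≤ k → MonotoneSetFn (g j))
    (hsup : ∀ j, 1 ≤ j → j ≤ k → Supermodular (g j))
    (f : Finset α → ℝ)
    (hf : ∀ S : Finset α, f S = (Finset.Icc 1 k).sup' (Finset.nonempty_Icc.2 hk)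
      (fun r => ∑ j ∈ Finset.Icc 1 r, g j S)) :
    Supermodular f := by
  intro S T
  obtain ⟨p, hp, hfp⟩ := Finset.exists_mem_eq_sup' (Finset.nonempty_Icc.2 hk)
    (fun r => ∑ j ∈ Finset.Icc 1 r, g j S)
  obtain ⟨q, hq, hfq⟩ := Finset.exists_mem_eq_sup' (Finset.nonempty_Icc.2 hk)
    (fun r => ∑ j ∈ Finset.Icc 1 r, g j T)
  simp only [Finset.mem_Icc] at hp hq
  rw [hf S, hf T, hfp, hfq]
  rcases le_total p q with hpq | hqp
  · calc (∑ j ∈ Finset.Icc 1 p, g j S) + (∑ j ∈ Finset.Icc 1 q, g j T) ≤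
        (∑ j ∈ Finset.Icc 1 q, g j (S ∪ T)) + (∑ j ∈ Finset.Icc 1 p, g j (S ∩ T)) :=
          prefix_max_aux k g hmono hsup p q hq.2 hpq S T
      _ ≤ _ := by
          rw [hf (S ∪ T), hf (S ∩ T)]
          exact add_le_add
            (Finset.le_sup' (fun r => ∑ j ∈ Finset.Icc 1 r, g j (S ∪ T)) (Finset.mem_Icc.2 hq))
            (Finset.le_sup' (fun r => ∑ j ∈ Finset.Icc 1 r, g j (S ∩ T)) (Finset.mem_Icc.2 hp))
  · calc (∑ j ∈ Finset.Icc 1 p, g j S) + (∑ j ∈ Finset.Icc 1 q, g j T) =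
        (∑ j ∈ Finset.Icc 1 q, g j T) + (∑ j ∈ Finset.Icc 1 p, g j S) := add_comm _ _
      _ ≤ (∑ j ∈ Finset.Icc 1 p, g j (T ∪ S)) + (∑ j ∈ Finset.Icc 1 q, g j (T ∩ S)) :=
          prefix_max_aux k g hmono hsup q p hp.2 hqp T S
      _ ≤ _ := by
          rw [hf (S ∪ T), hf (S ∩ T), Finset.union_comm S T, Finset.inter_comm S T]
          exact add_le_add
            (Finset.le_sup' (fun r => ∑ j ∈ Finset.Icc 1 r, g j (T ∪ S)) (Finset.mem_Icc.2 hp))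
            (Finset.le_sup' (fun r => ∑ j ∈ Finset.Icc 1 r, g j (T ∩ S)) (Finset.mem_Icc.2 hq))
end

section
/- Let N be a finite set with p, w : N → ℝ≥0, let ≺ be a linear order on N, and fix i ∈ N. Define, for S ⊆ N, f_i(S) = max over r ∈ N with i ⪯ r of Σ_{j : i ≺ j ⪯ r} ( 1_S(j)·p_i·w_j − p_j·w_i ), where the term for r = i is the empty sum 0. Then f_i is a supermodular set function on 2^N. -/
/-- For a fixed player `i` in a linearly ordered set of players (the order being given by
the positions `σ`), the function
`f_i(S) = max_{r ⪰ i} Σ_{i ≺ j ⪯ r} (1_S(j)·p_i·w_j − p_j·w_i)` is supermodular. -/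
theorem stepGain_supermodular {n : ℕ} (p w : Fin n → ℝ) (hp : ∀ x, 0 ≤ p x)
    (hw : ∀ x, 0 ≤ w x) (σ : Equiv.Perm (Fin n)) (i : Fin n)
    (f : Finset (Fin n) → ℝ)
    (hf : ∀ S : Finset (Fin n),
      f S = (Finset.univ.filter (fun r => σ i ≤ σ r)).sup'
        ⟨i, by simp⟩
        (fun r => ∑ j ∈ Finset.univ.filter (fun j => σ i < σ j ∧ σ j ≤ σ r),
          ((if j ∈ S then p i * w j else 0) - p j * w i))) :
    Supermodular f := by
  intro S T
  set R : Finset (Fin n) := Finset.univ.filter (fun r => σ i ≤ σ r) with hR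
  have hne : R.Nonempty := ⟨i, by simp [hR]⟩
  set g : Finset (Fin n) → Fin n → ℝ := fun X r =>
    ∑ j ∈ Finset.univ.filter (fun j => σ i < σ j ∧ σ j ≤ σ r),
      ((if j ∈ X then p i * w j else 0) - p j * w i) with hg
  have hfg : ∀ X, f X = R.sup' hne (g X) := fun X => hf X
  have hle : ∀ X r, r ∈ R → g X r ≤ f X := by
    intro X r hr
    rw [hfg]
    exact Finset.le_sup' (g X) hr
  have key : ∀ (A B : Finset (Fin n)) (r1 r2 : Fin n), σ r1 ≤ σ r2 →
      g A r1 + g B r2 ≤ g (A ∩ B) r1 + g (A ∪ B) r2 := by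
    intro A B r1 r2 h12
    set J1 : Finset (Fin n) := Finset.univ.filter (fun j => σ i < σ j ∧ σ j ≤ σ r1) with hJ1
    set J2 : Finset (Fin n) := Finset.univ.filter (fun j => σ i < σ j ∧ σ j ≤ σ r2) with hJ2
    have hsub : J1 ⊆ J2 := by
      intro j hj
      simp only [hJ1, hJ2, Finset.mem_filter, Finset.mem_univ, true_and] at hj ⊢
      exact ⟨hj.1, hj.2.trans h12⟩
    have expand : ∀ (X : Finset (Fin n)) (J : Finset (Fin n)),
        (∑ j ∈ J, ((if j ∈ X then p i * w j else 0) - p j * w i)) =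
        (∑ j ∈ J, (if j ∈ X then p i * w j else 0)) - ∑ j ∈ J, p j * w i :=
      fun X J => Finset.sum_sub_distrib _ _
    have hgdef : ∀ X r, g X r =
        ∑ j ∈ Finset.univ.filter (fun j => σ i < σ j ∧ σ j ≤ σ r),
          ((if j ∈ X then p i * w j else 0) - p j * w i) := fun X r => rfl
    have h1 : ∀ X : Finset (Fin n),
        (∑ j ∈ J1, (if j ∈ X then p i * w j else 0)) =
        ∑ j ∈ J2, (if j ∈ J1 then (if j ∈ X then p i * w j else 0) else 0) := by
      intro X
      have h := Finset.sum_ite_mem J2 J1 (fun j => if j ∈ X then p i * w j else 0)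
      rw [Finset.inter_eq_right.mpr hsub] at h
      exact h.symm
    have main : (∑ j ∈ J1, (if j ∈ A then p i * w j else 0)) +
        (∑ j ∈ J2, (if j ∈ B then p i * w j else 0)) ≤
        (∑ j ∈ J1, (if j ∈ A ∩ B then p i * w j else 0)) +
        (∑ j ∈ J2, (if j ∈ A ∪ B then p i * w j else 0)) := by
      rw [h1 A, h1 (A ∩ B), ← Finset.sum_add_distrib, ← Finset.sum_add_distrib]
      apply Finset.sum_le_sum
      intro j _
      have hc : (0:ℝ) ≤ p i * w j := mul_nonneg (hp i) (hw j)
      by_cases hJ : j ∈ J1 <;> by_cases hA : j ∈ A <;> by_cases hB : j ∈ B <;>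
        simp [hJ, hA, hB, Finset.mem_inter, Finset.mem_union] <;> linarith
    rw [hgdef, hgdef, hgdef, hgdef, ← hJ1, ← hJ2, expand, expand, expand, expand]
    linarith
  obtain ⟨r1, hr1, hgr1⟩ := Finset.exists_mem_eq_sup' hne (g S)
  obtain ⟨r2, hr2, hgr2⟩ := Finset.exists_mem_eq_sup' hne (g T)
  rcases le_total (σ r1) (σ r2) with h | h
  · calc f S + f T = g S r1 + g T r2 := by rw [hfg S, hfg T, hgr1, hgr2]
      _ ≤ g (S ∩ T) r1 + g (S ∪ T) r2 := key S T r1 r2 h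
      _ ≤ f (S ∩ T) + f (S ∪ T) := add_le_add (hle _ _ hr1) (hle _ _ hr2)
      _ = f (S ∪ T) + f (S ∩ T) := by ring
  · calc f S + f T = g T r2 + g S r1 := by rw [hfg S, hfg T, hgr1, hgr2]; ring
      _ ≤ g (T ∩ S) r2 + g (T ∪ S) r1 := key T S r2 r1 h
      _ = g (S ∩ T) r2 + g (S ∪ T) r1 := by rw [Finset.inter_comm, Finset.union_comm]
      _ ≤ f (S ∩ T) + f (S ∪ T) := add_le_add (hle _ _ hr2) (hle _ _ hr1)
      _ = f (S ∪ T) + f (S ∩ T) := by ring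
end

section
/- For every coalition S ⊆ N there exists an order σ* that is admissible for S, attains the minimum of C_S over all orders admissible for S, and satisfies Smith's rule within each component of S: whenever j, k ∈ S lie in the same component of S with respect to σ* and σ*(j) < σ*(k), one has u_j ≥ u_k. -/
open Finset

section Aux
variable {n : ℕ}

lemma swap_le_iff (c c' : Fin n) (hcc : (c : ℕ) + 1 = (c' : ℕ)) (a b : Fin n) (hb : b ≠ c) :
    Equiv.swap c c' a ≤ b ↔ a ≤ b := by
  have hbc : (b:ℕ) ≠ (c:ℕ) := fun h => hb (Fin.ext h)
  rcases eq_or_ne a c with rfl | hac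
  · rw [Equiv.swap_apply_left]
    simp only [Fin.le_def]; omega
  rcases eq_or_ne a c' with rfl | hac'
  · rw [Equiv.swap_apply_right]
    simp only [Fin.le_def]; omega
  · rw [Equiv.swap_apply_of_ne_of_ne hac hac']

lemma swap_coalCost (p w : Fin n → ℝ) (S : Finset (Fin n)) (σ : Equiv.Perm (Fin n))
    (c c' : Fin n) (hcc : (c : ℕ) + 1 = (c' : ℕ))
    (hx : σ.symm c ∈ S) (hy : σ.symm c' ∈ S) :
    coalCost p w S (σ.trans (Equiv.swap c c')) =
      coalCost p w S σ + w (σ.symm c) * p (σ.symm c') - w (σ.symm c') * p (σ.symm c) := by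
  classical
  set x := σ.symm c with hxdef
  set y := σ.symm c' with hydef
  have hcc' : c ≠ c' := fun h => by rw [h] at hcc; omega
  have hxy : x ≠ y := fun h => hcc' (by simpa using congrArg σ (show σ.symm c = σ.symm c' from h))
  set σ' := σ.trans (Equiv.swap c c') with hσ'
  have hσx : σ x = c := σ.apply_symm_apply c
  have hσy : σ y = c' := σ.apply_symm_apply c'
  have hσ'x : σ' x = c' := by simp [hσ', hσx]
  have hσ'y : σ' y = c := by simp [hσ', hσy]
  have hσ'other : ∀ j, j ≠ x → j ≠ y → σ' j = σ j := by
    intro j hjx hjy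
    have h1 : σ j ≠ c := fun h => hjx (by rw [hxdef, ← h]; simp)
    have h2 : σ j ≠ c' := fun h => hjy (by rw [hydef, ← h]; simp)
    simp [hσ', Equiv.swap_apply_of_ne_of_ne h1 h2]
  have hpc_other : ∀ j, j ≠ x → j ≠ y → playerCost p w σ' j = playerCost p w σ j := by
    intro j hjx hjy
    have h1 : σ j ≠ c := fun h => hjx (by rw [hxdef, ← h]; simp)
    unfold playerCost
    rw [hσ'other j hjx hjy]
    congr 1
    apply Finset.sum_congr _ (fun _ _ => rfl)
    ext k
    simp only [mem_filter, mem_univ, true_and, hσ', Equiv.trans_apply]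
    exact swap_le_iff c c' hcc (σ k) (σ j) h1
  -- the big filter set
  have hAc' : (univ.filter (fun k => σ k ≤ c')) = insert y (univ.filter (fun k => σ k ≤ c)) := by
    ext k
    simp only [mem_filter, mem_univ, true_and, mem_insert]
    constructor
    · intro h
      rcases eq_or_ne (σ k) c' with h' | h'
      · left; rw [hydef, ← h']; simp
      · right
        have : (σ k : ℕ) ≠ (c' : ℕ) := fun hh => h' (Fin.ext hh)
        rw [Fin.le_def] at *; omega
    · rintro (rfl | h)
      · rw [hσy]
      · exact le_trans h (by rw [Fin.le_def]; omega)
  have hynot : y ∉ univ.filter (fun k => σ k ≤ c) := by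
    simp only [mem_filter, mem_univ, true_and, hσy, Fin.le_def]; omega
  have hxin : x ∈ univ.filter (fun k => σ k ≤ c) := by
    simp [hσx]
  -- pc at x
  have hpcx : playerCost p w σ' x = playerCost p w σ x + w x * p y := by
    unfold playerCost
    rw [hσ'x, hσx]
    have hset : (univ.filter (fun k => σ' k ≤ c')) = univ.filter (fun k => σ k ≤ c') := by
      ext k
      simp only [mem_filter, mem_univ, true_and, hσ', Equiv.trans_apply]
      exact swap_le_iff c c' hcc (σ k) c' (fun h => hcc' h.symm)
    rw [hset, hAc', Finset.sum_insert hynot]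
    ring
  -- pc at y
  have hpcy : playerCost p w σ' y = playerCost p w σ y - w y * p x := by
    unfold playerCost
    rw [hσ'y, hσy]
    have hset : (univ.filter (fun k => σ' k ≤ c)) =
        insert y ((univ.filter (fun k => σ k ≤ c)).erase x) := by
      ext k
      simp only [mem_filter, mem_univ, true_and, mem_insert, mem_erase, hσ', Equiv.trans_apply]
      rcases eq_or_ne k x with rfl | hkx
      · simp only [hσx, Equiv.swap_apply_left, Fin.le_def]
        constructor
        · intro h; exact absurd h (by omega)
        · rintro (h | ⟨h, _⟩)
          · exact absurd h hxy
          · exact absurd rfl h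
      rcases eq_or_ne k y with rfl | hky
      · simp [hσy]
      · have h1 : σ k ≠ c := fun h => hkx (by rw [hxdef, ← h]; simp)
        have h2 : σ k ≠ c' := fun h => hky (by rw [hydef, ← h]; simp)
        rw [Equiv.swap_apply_of_ne_of_ne h1 h2]
        constructor
        · intro h; exact Or.inr ⟨hkx, h⟩
        · rintro (rfl | ⟨_, h⟩)
          · exact absurd hσy h2
          · exact h
    rw [hset, Finset.sum_insert (by simp [hynot, hxy]), Finset.sum_erase_eq_sub hxin, hAc',
      Finset.sum_insert hynot]
    ring
  -- assemble
  unfold coalCost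
  have key : ∀ j ∈ S, playerCost p w σ' j =
      playerCost p w σ j + (if j = x then w x * p y else 0) - (if j = y then w y * p x else 0) := by
    intro j _
    rcases eq_or_ne j x with rfl | hjx
    · simp [hpcx, hxy]
    rcases eq_or_ne j y with rfl | hjy
    · simp [hpcy, hjx]
    · simp [hpc_other j hjx hjy, hjx, hjy]
  rw [Finset.sum_congr rfl key]
  rw [Finset.sum_sub_distrib, Finset.sum_add_distrib,
    Finset.sum_ite_eq' S x (fun _ => w x * p y), Finset.sum_ite_eq' S y (fun _ => w y * p x)]
  simp [hx, hy]

lemma swap_admissible (σ0 : Equiv.Perm (Fin n)) (S : Finset (Fin n)) (σ : Equiv.Perm (Fin n))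
    (hσ : Admissible σ0 S σ) (c c' : Fin n) (hcc : (c : ℕ) + 1 = (c' : ℕ))
    (hx : σ.symm c ∈ S) (hy : σ.symm c' ∈ S) :
    Admissible σ0 S (σ.trans (Equiv.swap c c')) := by
  intro i j hi hij
  have h1 := hσ i j hi hij
  have hic : σ i ≠ c := fun h => hi (by rw [show i = σ.symm c from by rw [← h]; simp]; exact hx)
  have hic' : σ i ≠ c' := fun h => hi (by rw [show i = σ.symm c' from by rw [← h]; simp]; exact hy)
  simp only [Equiv.trans_apply, Equiv.swap_apply_of_ne_of_ne hic hic']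
  rcases eq_or_ne (σ j) c with h | h
  · rw [h, Equiv.swap_apply_left]
    have h2 : (σ i : ℕ) ≤ (c : ℕ) := by rw [h] at h1; exact h1
    rw [Fin.le_def]; omega
  rcases eq_or_ne (σ j) c' with h' | h'
  · rw [h', Equiv.swap_apply_right]
    have h2 : (σ i : ℕ) ≤ (c' : ℕ) := by rw [h'] at h1; exact h1
    have h3 : (σ i : ℕ) ≠ (c' : ℕ) := fun hh => hic' (Fin.ext hh)
    rw [Fin.le_def]; omega
  · rw [Equiv.swap_apply_of_ne_of_ne h h']
    exact h1

end Aux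

/-- For every coalition `S` there is an admissible order minimizing `C_S` over all
admissible orders that also respects Smith's rule within each component of `S`. -/
theorem exists_optimal_smith {n : ℕ} (p w : Fin n → ℝ) (hp : ∀ i, 0 < p i)
    (hw : ∀ i, 0 ≤ w i) (σ0 : Equiv.Perm (Fin n)) (S : Finset (Fin n)) :
    ∃ σs : Equiv.Perm (Fin n), Admissible σ0 S σs ∧
      (∀ σ : Equiv.Perm (Fin n), Admissible σ0 S σ → coalCost p w S σs ≤ coalCost p w S σ) ∧
      ∀ j k : Fin n, SameComponent S σs j k → σs j < σs k → w k / p k ≤ w j / p j := by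
  
  classical
  obtain ⟨σs, hmem, hmin⟩ := Finset.exists_min_image
    (Finset.univ.filter fun σ => Admissible σ0 S σ) (coalCost p w S)
    ⟨σ0, by simp only [mem_filter, mem_univ, true_and]; exact fun i j _ h => h⟩
  simp only [mem_filter, mem_univ, true_and] at hmem
  have hmin' : ∀ σ, Admissible σ0 S σ → coalCost p w S σs ≤ coalCost p w S σ := fun σ hσ =>
    hmin σ (by simp only [mem_filter, mem_univ, true_and]; exact hσ)
  refine ⟨σs, hmem, hmin', ?_⟩
  intro j k hcomp hlt
  by_contra hcon
  push_neg at hcon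
  obtain ⟨hjS, hkS, hbet⟩ := hcomp
  have hmin_eq : min (σs j) (σs k) = σs j := min_eq_left hlt.le
  have hmax_eq : max (σs j) (σs k) = σs k := max_eq_right hlt.le
  have hmid : ∀ m : Fin n, σs j ≤ m → m ≤ σs k → σs.symm m ∈ S := by
    intro m h1 h2
    refine hbet _ ?_ ?_ <;> rw [Equiv.apply_symm_apply]
    · rw [hmin_eq]; exact h1
    · rw [hmax_eq]; exact h2
  set u : Fin n → ℝ := fun i => w i / p i with hu
  have hkb : (σs k : ℕ) < n := (σs k).isLt
  have hltn : (σs j : ℕ) < (σs k : ℕ) := hlt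
  have hadj : ∃ c c' : Fin n, (c : ℕ) + 1 = (c' : ℕ) ∧ σs j ≤ c ∧ c' ≤ σs k ∧
      u (σs.symm c) < u (σs.symm c') := by
    by_contra hno
    push_neg at hno
    have key : ∀ d : ℕ, (σs j : ℕ) + d ≤ (σs k : ℕ) →
        ∀ hdn : (σs j : ℕ) + d < n, u (σs.symm ⟨(σs j : ℕ) + d, hdn⟩) ≤ u j := by
      intro d
      induction d with
      | zero =>
        intro _ hdn
        have h0 : (⟨(σs j : ℕ) + 0, hdn⟩ : Fin n) = σs j := Fin.ext (by simp)
        rw [h0, Equiv.symm_apply_apply]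
      | succ d ih =>
        intro hd hdn
        have h1 := ih (by omega) (by omega)
        refine le_trans (hno ⟨(σs j : ℕ) + d, by omega⟩ ⟨(σs j : ℕ) + d + 1, by omega⟩
          rfl ?_ ?_) h1
        · rw [Fin.le_def]; simp
        · rw [Fin.le_def]; simp; omega
    have hfin := key ((σs k : ℕ) - (σs j : ℕ)) (by omega) (by omega)
    have h0 : (⟨(σs j : ℕ) + ((σs k : ℕ) - (σs j : ℕ)), by omega⟩ : Fin n) = σs k :=
      Fin.ext (by simp; omega)
    rw [h0, Equiv.symm_apply_apply] at hfin
    exact absurd hcon (not_lt.mpr hfin)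
  obtain ⟨c, c', hcc, h1, h2, huv⟩ := hadj
  have hcle : c ≤ σs k := le_trans (by rw [Fin.le_def]; omega) h2
  have hc'ge : σs j ≤ c' := le_trans h1 (by rw [Fin.le_def]; omega)
  have hxS : σs.symm c ∈ S := hmid c h1 hcle
  have hyS : σs.symm c' ∈ S := hmid c' hc'ge h2
  have hadm := swap_admissible σ0 S σs hmem c c' hcc hxS hyS
  have hcost := swap_coalCost p w S σs c c' hcc hxS hyS
  have hprod : w (σs.symm c) * p (σs.symm c') < w (σs.symm c') * p (σs.symm c) := by
    have := (div_lt_div_iff₀ (hp (σs.symm c)) (hp (σs.symm c'))).mp huv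
    linarith
  have := hmin' _ hadm
  rw [hcost] at this
  linarith
end
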